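/- Let H be a semigroup and G an H-group satisfying H-max-n. Suppose G is residually finite as an H-group (for every g ≠ 1 there is a finite-index H-stable normal subgroup of G not containing g), and likewise every H-quotient of G is residually finite as an H-group. Then cb_H(G) = ℓ'_H(G). -/

import Mathlib

noncomputable section

/-- Chabauty topology on the set of subgroups of `G`: the topology induced from the
product topology on `{0,1}^G` via indicator functions. -/
noncomputable instance chabautyTopology {G : Type*} [Group G] : TopologicalSpace (Subgroup G) :=
  TopologicalSpace.induced (fun N g => @decide (g ∈ N) (Classical.propDecidable _))
    (inferInstance : TopologicalSpace (G → Bool))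

/-- Iterated Cantor–Bendixson derivatives of the space `X`:
`X^(0) = X`, `X^(α+1)` is the set of accumulation points of `X^(α)`, and
`X^(λ) = ⋂_{β<λ} X^(β)` for limit `λ`. -/
noncomputable def cbD (X : Type*) [TopologicalSpace X] (o : Ordinal) : Set X :=
  Ordinal.limitRecOn o Set.univ (fun _ ih => {x | AccPt x (Filter.principal ih)})
    (fun o _ ih => ⋂ β : Set.Iio o, ih β.1 β.2)

/-- The point `x` has Cantor–Bendixson rank exactly `α` in `X`: it belongs to the `α`-th
derivative but not to the `(α+1)`-st (so `α` is the largest ordinal with `x ∈ X^(α)`). -/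
def CBRankEq {X : Type*} [TopologicalSpace X] (x : X) (α : Ordinal) : Prop :=
  x ∈ cbD X α ∧ x ∉ cbD X (α + 1)

/-- The Cantor–Bendixson rank of a point: the largest `α` with `x ∈ X^(α)`
(the set of such `α` is an initial segment of the ordinals, closed under limits). -/
noncomputable def cbRank {X : Type*} [TopologicalSpace X] (x : X) : Ordinal :=
  sSup {α | x ∈ cbD X α}

/-- The trivial subgroup, as a point of the space `𝒩(G)` of normal subgroups of `G`
(with its Chabauty topology); `cb(G)` is the Cantor–Bendixson rank of this point. -/
def nsBot (G : Type*) [Group G] : {N : Subgroup G // N.Normal} := ⟨⊥, inferInstance⟩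

universe u

open Classical in
/-- The ordinal-valued "length" attached to an element of a poset `L`, defined by
well-founded recursion on `>` (available under the max-n condition, i.e. well-foundedness
of `>`; junk value `0` otherwise): `gtRank x = sup { gtRank y + 1 : y > x }`.

For `L` the lattice of (`H`-stable) normal subgroups of a group `G` (resp. of submodules
of a module `M`), `gtRank N` is the ordinal length `ℓ(G/N)` (resp. `ℓ(M/N)`) of the
quotient, since (`H`-stable) normal subgroups of `G/N` correspond to those of `G`
containing `N`; in particular `gtRank ⊥ = ℓ(G)` (resp. `ℓ(M)`). -/
noncomputable def gtRank {L : Type u} [Preorder L] (x : L) : Ordinal.{u} :=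
  if h : WellFounded ((· > ·) : L → L → Prop) then (h.apply x).rank else 0

/-- An `H`-group structure on `G` (for `H` a semigroup) is an action of `H` on `G` by group
endomorphisms, i.e. a semigroup homomorphism `H → End(G)`. A normal subgroup `N` is
`H`-stable if it is invariant under the action. -/
def HStable {H G : Type*} [Mul H] [Group G] (act : H →ₙ* Monoid.End G)
    (N : Subgroup G) : Prop :=
  ∀ (h : H) (g : G), g ∈ N → act h g ∈ N

/-- The trivial subgroup as a point of the space `𝒩_H(G)` of `H`-stable normal
subgroups of `G`. -/
def hBot {H G : Type*} [Mul H] [Group G] (act : H →ₙ* Monoid.End G) :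
    {N : Subgroup G // N.Normal ∧ HStable act N} :=
  ⟨⊥, inferInstance, fun h g hg => by
    rw [Subgroup.mem_bot] at hg ⊢
    rw [hg, map_one]⟩

/-- The trivial subgroup as an element of the lattice of `H`-stable normal subgroups of `G`
contained in `M`; this lattice is the lattice of `GH`-stable normal subgroups of the
`GH`-group `M` (where `GH = G ⋊ H` acts on the normal subgroup `M` by conjugation and by
the `H`-action), so that `gtRank` of this element is the length `ℓ_{GH}(M)`. -/
def hBotIn {H G : Type*} [Mul H] [Group G] (act : H →ₙ* Monoid.End G) (M : Subgroup G) :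
    {K : Subgroup G // (K.Normal ∧ HStable act K) ∧ K ≤ M} :=
  ⟨⊥, ⟨inferInstance, fun h g hg => by
    rw [Subgroup.mem_bot] at hg ⊢
    rw [hg, map_one]⟩, bot_le⟩

section RankLemmas

variable {L : Type u} [PartialOrder L]

theorem gtRank_def (hwf : WellFounded ((· > ·) : L → L → Prop)) (x : L) :
    gtRank x = (hwf.apply x).rank := by
  rw [gtRank, dif_pos hwf]

theorem acc_rank_eq (hwf : WellFounded ((· > ·) : L → L → Prop)) (x : L)
    (h : Acc ((· > ·) : L → L → Prop) x) : h.rank = (hwf.apply x).rank := by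
  congr 1

theorem gtRank_lt_of_lt (hwf : WellFounded ((· > ·) : L → L → Prop)) {x y : L} (h : x < y) :
    gtRank y < gtRank x := by
  rw [gtRank_def hwf x, gtRank_def hwf y, ← acc_rank_eq hwf y ((hwf.apply x).inv h)]
  exact Acc.rank_lt_of_rel (hwf.apply x) h

theorem gtRank_le_iff (hwf : WellFounded ((· > ·) : L → L → Prop)) {x : L} {o : Ordinal.{u}} :
    gtRank x ≤ o ↔ ∀ y : L, x < y → gtRank y < o := by
  constructor
  · intro hle y hy
    exact lt_of_lt_of_le (gtRank_lt_of_lt hwf hy) hle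
  · intro hall
    rw [gtRank_def hwf x, Acc.rank_eq, Ordinal.iSup_le_iff]
    rintro ⟨b, hb⟩
    rw [Order.succ_le_iff, acc_rank_eq hwf b, ← gtRank_def hwf b]
    exact hall b hb

theorem gtRank_antitone (hwf : WellFounded ((· > ·) : L → L → Prop)) {x y : L} (h : x ≤ y) :
    gtRank y ≤ gtRank x := by
  rw [gtRank_le_iff hwf]
  exact fun z hz => gtRank_lt_of_lt hwf (lt_of_le_of_lt h hz)

theorem exists_gt_of_lt_gtRank (hwf : WellFounded ((· > ·) : L → L → Prop)) {x : L}
    {o : Ordinal.{u}} (h : o < gtRank x) : ∃ y : L, x < y ∧ o ≤ gtRank y := by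
  by_contra hcon
  push_neg at hcon
  exact absurd ((gtRank_le_iff hwf).2 hcon) (not_le.2 h)

end RankLemmas
section TopoLemmas

theorem piBool_nhds_basis {G : Type u} (x : G → Bool) :
    (nhds x).HasBasis (fun _ : Finset G => True) (fun F => {y | ∀ g ∈ F, y g = x g}) := by
  constructor
  intro s
  constructor
  · intro hs
    obtain ⟨U, hUs, hUopen, hxU⟩ := mem_nhds_iff.1 hs
    obtain ⟨I, u, hu, hpi⟩ := isOpen_pi_iff.1 hUopen x hxU
    refine ⟨I, trivial, ?_⟩
    intro y hy
    apply hUs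
    apply hpi
    intro g hg
    have := hy g hg
    rw [this]
    exact (hu g hg).2
  · rintro ⟨F, -, hsub⟩
    refine Filter.mem_of_superset ?_ hsub
    have hopen : IsOpen {y : G → Bool | ∀ g ∈ F, y g = x g} := by
      have : {y : G → Bool | ∀ g ∈ F, y g = x g} = ⋂ g ∈ F, (fun y : G → Bool => y g) ⁻¹' {x g} := by
        ext y; simp
      rw [this]
      exact isOpen_biInter_finset fun g _ => (continuous_apply g).isOpen_preimage _ trivial
    exact hopen.mem_nhds (fun g _ => rfl)

theorem chabauty_nhds_basis {G : Type u} [Group G] {p : Subgroup G → Prop}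
    (N : {Y : Subgroup G // p Y}) :
    (nhds N).HasBasis (fun _ : Finset G => True)
      (fun F => {M : {Y : Subgroup G // p Y} | ∀ g ∈ F, (g ∈ M.1 ↔ g ∈ N.1)}) := by
  have h1 : nhds N = Filter.comap Subtype.val (nhds N.1) := nhds_induced _ _
  have h2 : nhds N.1 = Filter.comap
      (fun (Y : Subgroup G) (g : G) => @decide (g ∈ Y) (Classical.propDecidable _))
      (nhds fun g => @decide (g ∈ N.1) (Classical.propDecidable _)) := nhds_induced _ _
  rw [h1, h2]
  have hb := ((piBool_nhds_basis (fun g => @decide (g ∈ N.1) (Classical.propDecidable _))).comap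
      (fun (Y : Subgroup G) (g : G) => @decide (g ∈ Y) (Classical.propDecidable _))).comap
      (Subtype.val : {Y : Subgroup G // p Y} → Subgroup G)
  refine hb.congr (fun _ => Iff.rfl) ?_
  intro F _
  ext M
  simp only [Set.mem_preimage, Set.mem_setOf_eq]
  refine forall₂_congr fun g _ => ?_
  exact decide_eq_decide

theorem chabauty_accPt_iff {G : Type u} [Group G] {p : Subgroup G → Prop}
    (N : {Y : Subgroup G // p Y}) (S : Set {Y : Subgroup G // p Y}) :
    AccPt N (Filter.principal S) ↔
      ∀ F : Finset G, ∃ M ∈ S, M ≠ N ∧ ∀ g ∈ F, (g ∈ M.1 ↔ g ∈ N.1) := by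
  rw [accPt_iff_nhds]
  constructor
  · intro h F
    obtain ⟨M, ⟨hMU, hMS⟩, hne⟩ := h _ ((chabauty_nhds_basis N).mem_of_mem (i := F) trivial)
    exact ⟨M, hMS, hne, hMU⟩
  · intro h U hU
    obtain ⟨F, -, hF⟩ := (chabauty_nhds_basis N).mem_iff.1 hU
    obtain ⟨M, hMS, hne, hag⟩ := h F
    exact ⟨M, ⟨hF hag, hMS⟩, hne⟩

end TopoLemmas
section GroupLattice

variable {G : Type u} [Group G]

/-- Modular-law style cancellation for subgroups, with `C` normal. -/
theorem le_of_le_sup_of_inf_le {A B C : Subgroup G} [hC : C.Normal]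
    (hAB : A ≤ B) (hsup : B ≤ A ⊔ C) (hinf : B ⊓ C ≤ A) : B ≤ A := by
  intro b hb
  have hb' : b ∈ (↑(A ⊔ C) : Set G) := hsup hb
  rw [Subgroup.mul_normal A C] at hb'
  obtain ⟨a, ha, c, hc, rfl⟩ := hb'
  have hcB : c ∈ B := by
    have : a⁻¹ * (a * c) ∈ B := B.mul_mem (B.inv_mem (hAB ha)) hb
    rwa [inv_mul_cancel_left] at this
  have : c ∈ A := hinf ⟨hcB, hc⟩
  exact A.mul_mem ha this

theorem index_lt_of_lt {A B : Subgroup G} (h : A < B) (hA : A.index ≠ 0) :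
    B.index < A.index := by
  have hmul := Subgroup.relIndex_mul_index h.le
  have hBne : B.index ≠ 0 := by
    intro h0
    rw [h0, Nat.mul_zero] at hmul
    exact hA hmul.symm
  have hrel1 : A.relIndex B ≠ 1 := fun h1 =>
    absurd (Subgroup.relIndex_eq_one.1 h1) h.not_ge
  have hrel0 : A.relIndex B ≠ 0 := by
    intro h0
    rw [h0, Nat.zero_mul] at hmul
    exact hA hmul.symm
  have h2 : 2 ≤ A.relIndex B := by omega
  calc B.index < 2 * B.index := by omega
    _ ≤ A.relIndex B * B.index := Nat.mul_le_mul_right _ h2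
    _ = A.index := hmul

theorem finite_quotient_of_index_ne_zero {K : Subgroup G} [K.Normal] (h : K.index ≠ 0) :
    Finite (G ⧸ K) := by
  rw [Subgroup.index] at h
  exact (Nat.card_ne_zero.1 h).2

end GroupLattice

section StableLattice

variable {H : Type*} [Mul H] {G : Type u} [Group G] (act : H →ₙ* Monoid.End G)

/-- The lattice of `H`-stable normal subgroups. -/
abbrev HNS := {N : Subgroup G // N.Normal ∧ HStable act N}

theorem isl_inf {A B : Subgroup G} (hA : A.Normal ∧ HStable act A)
    (hB : B.Normal ∧ HStable act B) : (A ⊓ B).Normal ∧ HStable act (A ⊓ B) := by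
  constructor
  · exact ⟨fun n hn g => ⟨hA.1.conj_mem n hn.1 g, hB.1.conj_mem n hn.2 g⟩⟩
  · exact fun h g hg => ⟨hA.2 h g hg.1, hB.2 h g hg.2⟩

theorem isl_sup {A B : Subgroup G} (hA : A.Normal ∧ HStable act A)
    (hB : B.Normal ∧ HStable act B) : (A ⊔ B).Normal ∧ HStable act (A ⊔ B) := by
  haveI := hA.1; haveI := hB.1
  refine ⟨inferInstance, fun h g hg => ?_⟩
  have hg' : g ∈ (↑(A ⊔ B) : Set G) := hg
  rw [Subgroup.mul_normal A B] at hg'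
  obtain ⟨a, ha, b, hb, rfl⟩ := hg'
  have : (act h) (a * b) = (act h) a * (act h) b := map_mul _ _ _
  rw [this]
  exact Subgroup.mul_mem _ (Subgroup.mem_sup_left (hA.2 h a ha))
    (Subgroup.mem_sup_right (hB.2 h b hb))

theorem isl_bot : (⊥ : Subgroup G).Normal ∧ HStable act ⊥ :=
  ⟨inferInstance, fun h g hg => by
    rw [Subgroup.mem_bot] at hg ⊢; rw [hg, map_one]⟩

theorem isl_top : (⊤ : Subgroup G).Normal ∧ HStable act ⊤ :=
  ⟨inferInstance, fun _ _ _ => trivial⟩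

/-- The `H`-stable normal closure of a set. -/
def hcl (s : Set G) : Subgroup G :=
  sInf {Y : Subgroup G | (Y.Normal ∧ HStable act Y) ∧ s ⊆ Y}

theorem isl_hcl (s : Set G) : (hcl act s).Normal ∧ HStable act (hcl act s) := by
  constructor
  · exact ⟨fun n hn g => Subgroup.mem_sInf.2 fun Y hY =>
      hY.1.1.conj_mem n (Subgroup.mem_sInf.1 hn Y hY) g⟩
  · exact fun h g hg => Subgroup.mem_sInf.2 fun Y hY =>
      hY.1.2 h g (Subgroup.mem_sInf.1 hg Y hY)

theorem subset_hcl (s : Set G) : s ⊆ (hcl act s : Set G) :=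
  fun g hg => Subgroup.mem_sInf.2 fun _ hY => hY.2 hg

theorem hcl_le {s : Set G} {Y : Subgroup G} (hY : Y.Normal ∧ HStable act Y) (hs : s ⊆ Y) :
    hcl act s ≤ Y := sInf_le ⟨hY, hs⟩

theorem hcl_mono {s t : Set G} (h : s ⊆ t) : hcl act s ≤ hcl act t :=
  le_sInf fun _ hY => sInf_le ⟨hY.1, h.trans hY.2⟩

theorem exists_finset_gen
    (hmax : WellFounded ((· > ·) : HNS act → HNS act → Prop)) (N : HNS act) :
    ∃ F : Finset G, (F : Set G) ⊆ (N.1 : Set G) ∧ hcl act (F : Set G) = N.1 := by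
  set S : Set (HNS act) :=
    {M | ∃ F : Finset G, (F : Set G) ⊆ (N.1 : Set G) ∧ M.1 = hcl act (F : Set G)} with hS
  have hne : S.Nonempty := ⟨⟨hcl act (∅ : Finset G), isl_hcl act _⟩, ∅, by simp, rfl⟩
  obtain ⟨M₀, ⟨F₀, hF₀sub, hM₀⟩, hmaxM⟩ := hmax.has_min S hne
  have hM₀le : M₀.1 ≤ N.1 := by
    rw [hM₀]; exact hcl_le act ⟨N.2.1, N.2.2⟩ hF₀sub
  have hNle : N.1 ≤ M₀.1 := by
    intro g hg
    haveI := Classical.decEq G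
    set F' : Finset G := insert g F₀ with hF'
    have hF'sub : (F' : Set G) ⊆ (N.1 : Set G) := by
      rw [hF', Finset.coe_insert]
      exact Set.insert_subset hg hF₀sub
    set M' : HNS act := ⟨hcl act (F' : Set G), isl_hcl act _⟩ with hM'
    have hM'S : M' ∈ S := ⟨F', hF'sub, rfl⟩
    have hle : M₀ ≤ M' := by
      rw [← Subtype.coe_le_coe, hM₀]
      exact hcl_mono act (by rw [hF', Finset.coe_insert]; exact Set.subset_insert _ _)
    have heq : M₀ = M' := le_antisymm hle (by
      by_contra hcon
      exact hmaxM M' hM'S (lt_of_le_of_ne hle (fun h => hcon (le_of_eq h.symm))))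
    have : g ∈ hcl act (F' : Set G) :=
      subset_hcl act _ (by rw [hF', Finset.coe_insert]; exact Set.mem_insert _ _)
    rw [heq]
    exact this
  exact ⟨F₀, hF₀sub, by rw [← hM₀]; exact le_antisymm hM₀le hNle⟩

end StableLattice
section MainLemmas

open Ordinal

variable {H : Type*} [Semigroup H] {G : Type u} [Group G] (act : H →ₙ* Monoid.End G)

/-- If every `H`-stable normal subgroup strictly between `N` and a finite-index `Cs`
has rank `< ω·α`, then `N` has rank `< ω·α + ω`. -/
theorem gtRank_lt_of_all_small
    (hmax : WellFounded ((· > ·) : HNS act → HNS act → Prop))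
    {N Cs : HNS act} {α : Ordinal.{u}} (hNC : N ≤ Cs) (hCidx : Cs.1.index ≠ 0)
    (hsmall : ∀ M : HNS act, N < M → M ≤ Cs → gtRank M < omega0 * α) :
    gtRank N < omega0 * α + omega0 := by
  haveI : Cs.1.Normal := Cs.2.1
  have key : ∀ Y : HNS act, N ≤ Y → Y.1 ⊓ Cs.1 = N.1 →
      gtRank Y ≤ omega0 * α + ((Y.1 ⊔ Cs.1).index : Ordinal) := by
    intro Y
    refine hmax.induction (C := fun Y => N ≤ Y → Y.1 ⊓ Cs.1 = N.1 →
      gtRank Y ≤ omega0 * α + ((Y.1 ⊔ Cs.1).index : Ordinal)) Y ?_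
    clear Y
    intro Y ih hNY hYC
    rw [gtRank_le_iff hmax]
    intro Z hZ
    have hNZ : N ≤ Z := hNY.trans hZ.le
    have hYZ1 : Y.1 < Z.1 := Subtype.coe_lt_coe.2 hZ
    have hNW : N.1 ≤ Z.1 ⊓ Cs.1 :=
      le_inf (Subtype.coe_le_coe.2 hNZ) (Subtype.coe_le_coe.2 hNC)
    by_cases hW : Z.1 ⊓ Cs.1 = N.1
    · have hne : Y.1 ⊔ Cs.1 ≠ Z.1 ⊔ Cs.1 := by
        intro heq
        have hZle : Z.1 ≤ Y.1 :=
          le_of_le_sup_of_inf_le hYZ1.le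
            (by rw [heq]; exact le_sup_left)
            (by rw [hW]; exact Subtype.coe_le_coe.2 hNY)
        exact hYZ1.not_ge hZle
      have hsuplt : Y.1 ⊔ Cs.1 < Z.1 ⊔ Cs.1 :=
        lt_of_le_of_ne (sup_le_sup_right hYZ1.le _) hne
      have hYCidx : (Y.1 ⊔ Cs.1).index ≠ 0 := by
        intro h0
        exact hCidx (Nat.eq_zero_of_zero_dvd (h0 ▸ Subgroup.index_dvd_of_le le_sup_right))
      have hidx : (Z.1 ⊔ Cs.1).index < (Y.1 ⊔ Cs.1).index := index_lt_of_lt hsuplt hYCidx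
      have hZrank := ih Z hZ hNZ hW
      calc gtRank Z ≤ omega0 * α + ((Z.1 ⊔ Cs.1).index : Ordinal) := hZrank
        _ < omega0 * α + ((Y.1 ⊔ Cs.1).index : Ordinal) :=
          add_lt_add_right (Nat.cast_lt.2 hidx) _
    · set M : HNS act := ⟨Z.1 ⊓ Cs.1, isl_inf act Z.2 Cs.2⟩ with hM
      have hNM : N < M := Subtype.coe_lt_coe.1 (lt_of_le_of_ne hNW (Ne.symm hW))
      have hMC : M ≤ Cs := Subtype.coe_le_coe.1 inf_le_right
      have h1 : gtRank Z ≤ gtRank M :=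
        gtRank_antitone hmax (Subtype.coe_le_coe.1 inf_le_left)
      have h2 : gtRank M < omega0 * α := hsmall M hNM hMC
      exact lt_of_le_of_lt h1 (lt_of_lt_of_le h2 le_self_add)
  have hNN : N.1 ⊓ Cs.1 = N.1 := inf_eq_left.2 (Subtype.coe_le_coe.2 hNC)
  have hsup : N.1 ⊔ Cs.1 = Cs.1 := sup_eq_right.2 (Subtype.coe_le_coe.2 hNC)
  calc gtRank N ≤ omega0 * α + ((N.1 ⊔ Cs.1).index : Ordinal) := key N le_rfl hNN
    _ < omega0 * α + omega0 := add_lt_add_right (by rw [hsup]; exact nat_lt_omega0 _) _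

/-- Backward direction at successors: large rank implies accumulation. -/
theorem accPt_of_omega_add_le
    (hmax : WellFounded ((· > ·) : HNS act → HNS act → Prop))
    (hres : ∀ N : Subgroup G, N.Normal → HStable act N → ∀ g ∉ N,
      ∃ K : Subgroup G, K.Normal ∧ HStable act K ∧ N ≤ K ∧ K.index ≠ 0 ∧ g ∉ K)
    {N : HNS act} {α : Ordinal.{u}} (h : omega0 * α + omega0 ≤ gtRank N) :
    AccPt N (Filter.principal {M : HNS act | omega0 * α ≤ gtRank M}) := by
  rw [chabauty_accPt_iff]
  intro F
  have hK : ∀ g : G, ∃ K : Subgroup G,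
      ((K.Normal ∧ HStable act K) ∧ N.1 ≤ K) ∧ K.index ≠ 0 ∧ (g ∉ N.1 → g ∉ K) := by
    intro g
    by_cases hg : g ∈ N.1
    · exact ⟨⊤, ⟨isl_top act, le_top⟩, by simp [Subgroup.index_top], fun hc => absurd hg hc⟩
    · obtain ⟨K, h1, h2, h3, h4, h5⟩ := hres N.1 N.2.1 N.2.2 g hg
      exact ⟨K, ⟨⟨h1, h2⟩, h3⟩, h4, fun _ => h5⟩
  choose k hk1 hk2 hk3 using hK
  classical
  have hprops : ∀ F' : Finset G,
      ((F'.inf k).Normal ∧ HStable act (F'.inf k)) ∧ N.1 ≤ F'.inf k ∧ (F'.inf k).index ≠ 0 := by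
    intro F'
    induction F' using Finset.induction_on with
    | empty =>
      rw [Finset.inf_empty]
      exact ⟨isl_top act, le_top, by simp [Subgroup.index_top]⟩
    | @insert a F'' ha ihF =>
      rw [Finset.inf_insert]
      exact ⟨isl_inf act (hk1 a).1 ihF.1,
        le_inf (hk1 a).2 ihF.2.1,
        Subgroup.index_inf_ne_zero (hk2 a) ihF.2.2⟩
  set Cs : HNS act := ⟨F.inf k, (hprops F).1⟩ with hCs
  have hNC : N ≤ Cs := Subtype.coe_le_coe.1 (hprops F).2.1
  have hex : ∃ M : HNS act, N < M ∧ M ≤ Cs ∧ omega0 * α ≤ gtRank M := by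
    by_contra hcon
    push_neg at hcon
    exact absurd (gtRank_lt_of_all_small act hmax hNC (hprops F).2.2
      (fun M h1 h2 => hcon M h1 h2)) (not_lt.2 h)
  obtain ⟨M, hNM, hMC, hMrank⟩ := hex
  refine ⟨M, hMrank, (ne_of_gt hNM), ?_⟩
  intro g hg
  constructor
  · intro hgM
    by_contra hgN
    have : M.1 ≤ k g := (Subtype.coe_le_coe.2 hMC).trans (Finset.inf_le hg)
    exact (hk3 g hgN) (this hgM)
  · intro hgN
    exact (Subtype.coe_le_coe.2 hNM.le) hgN

end MainLemmas
section Atoms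

open Ordinal

variable {H : Type*} [Semigroup H] {G : Type u} [Group G] (act : H →ₙ* Monoid.End G)

/-- `A` is an atom over `N` in the lattice of `H`-stable normal subgroups. -/
def AtomOver (N A : HNS act) : Prop :=
  N < A ∧ ∀ Z : HNS act, N < Z → Z ≤ A → Z = A

theorem exists_atom_le {N X : HNS act} {K : Subgroup G} (hKn : K.Normal)
    (hKidx : K.index ≠ 0) (hXK : X.1 ⊓ K = N.1) (hNX : N < X) :
    ∃ A : HNS act, AtomOver act N A ∧ A ≤ X := by
  haveI := hKn
  haveI : Finite (G ⧸ K) := finite_quotient_of_index_ne_zero hKidx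
  set π := QuotientGroup.mk' K with hπdef
  set I : Set (HNS act) := {Y | N < Y ∧ Y ≤ X} with hI
  have hNle : ∀ Y : HNS act, Y ∈ I → N.1 ≤ Y.1 := fun Y hY => Subtype.coe_le_coe.2 hY.1.le
  have key : ∀ W₁ W₂ : HNS act, W₁ ∈ I → W₂ ∈ I → W₁.1.map π = W₂.1.map π →
      W₁.1 ≤ W₂.1 := by
    intro W₁ W₂ hW₁ hW₂ he b hb
    have hbm : π b ∈ W₂.1.map π := he ▸ Subgroup.mem_map.2 ⟨b, hb, rfl⟩
    obtain ⟨w, hw, hwb⟩ := Subgroup.mem_map.1 hbm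
    have hwK : w⁻¹ * b ∈ K := by
      rw [hπdef, QuotientGroup.mk'_apply, QuotientGroup.mk'_apply] at hwb
      exact QuotientGroup.eq.1 hwb
    have hX1 : w⁻¹ * b ∈ X.1 :=
      X.1.mul_mem (X.1.inv_mem ((Subtype.coe_le_coe.2 hW₂.2) hw))
        ((Subtype.coe_le_coe.2 hW₁.2) hb)
    have hN : w⁻¹ * b ∈ N.1 := by rw [← hXK]; exact ⟨hX1, hwK⟩
    have : w * (w⁻¹ * b) ∈ W₂.1 := W₂.1.mul_mem hw (hNle W₂ hW₂ hN)
    rwa [mul_inv_cancel_left] at this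
  have hinj : Set.InjOn (fun Y : HNS act => Y.1.map π) I := by
    intro Y₁ h₁ Y₂ h₂ heq
    exact Subtype.ext (le_antisymm (key Y₁ Y₂ h₁ h₂ heq) (key Y₂ Y₁ h₂ h₁ heq.symm))
  have hIfin : I.Finite :=
    Set.Finite.of_finite_image (Set.toFinite _) hinj
  obtain ⟨A, hAI, hAmin⟩ := hIfin.exists_minimal ⟨X, hNX, le_rfl⟩
  refine ⟨A, ⟨hAI.1, ?_⟩, hAI.2⟩
  intro Z hNZ hZA
  exact le_antisymm hZA (hAmin ⟨hNZ, hZA.trans hAI.2⟩ hZA)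

end Atoms
section AtomProduction

open Ordinal

variable {H : Type*} [Semigroup H] {G : Type u} [Group G] (act : H →ₙ* Monoid.End G)

theorem exists_atom_agree
    (hmax : WellFounded ((· > ·) : HNS act → HNS act → Prop))
    (hres : ∀ N : Subgroup G, N.Normal → HStable act N → ∀ g ∉ N,
      ∃ K : Subgroup G, K.Normal ∧ HStable act K ∧ N ≤ K ∧ K.index ≠ 0 ∧ g ∉ K)
    {N : HNS act} {α : Ordinal.{u}} {n : ℕ}
    (hrankN : gtRank N ≤ omega0 * α + (n : Ordinal)) (F : Finset G) :
    ∀ m : ℕ, ∀ M : HNS act, N < M → (∀ g ∈ F, (g ∈ M.1 ↔ g ∈ N.1)) →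
      omega0 * α + ((n - m : ℕ) : Ordinal) ≤ gtRank M →
      ∃ A : HNS act, AtomOver act N A ∧ ∀ g ∈ F, (g ∈ A.1 ↔ g ∈ N.1) := by
  intro m
  induction m with
  | zero =>
    intro M hNM hag hge
    exfalso
    have h1 : gtRank M < gtRank N := gtRank_lt_of_lt hmax hNM
    have h2 : gtRank N ≤ gtRank M := hrankN.trans (by simpa using hge)
    exact absurd (h2.trans_lt h1) (lt_irrefl _)
  | succ m ihm =>
    intro M hNM hag hge
    obtain ⟨g, hgM, hgN⟩ := SetLike.exists_of_lt (Subtype.coe_lt_coe.2 hNM)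
    by_cases hgN' : g ∈ N.1
    · exact absurd hgN' hgN
    obtain ⟨K, hK1, hK2, hK3, hK4, hK5⟩ := hres N.1 N.2.1 N.2.2 g hgN
    by_cases hW : M.1 ⊓ K = N.1
    · obtain ⟨A, hA, hAX⟩ := exists_atom_le act hK1 hK4 hW hNM
      exact ⟨A, hA, fun g' hg' => ⟨fun h => (hag g' hg').1 ((Subtype.coe_le_coe.2 hAX) h),
        fun h => (Subtype.coe_le_coe.2 hA.1.le) h⟩⟩
    · set M' : HNS act := ⟨M.1 ⊓ K, isl_inf act M.2 ⟨hK1, hK2⟩⟩ with hM'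
      have hNM' : N < M' := by
        refine Subtype.coe_lt_coe.1 (lt_of_le_of_ne ?_ (Ne.symm hW))
        exact le_inf (Subtype.coe_le_coe.2 hNM.le) hK3
      have hM'M : M' < M := by
        refine Subtype.coe_lt_coe.1 (lt_of_le_of_ne inf_le_left ?_)
        intro heq
        have hgM' : g ∈ M'.1 := by rw [heq]; exact hgM
        exact hK5 (Subgroup.mem_inf.1 hgM').2
      have hrank' : omega0 * α + ((n - m : ℕ) : Ordinal) ≤ gtRank M' := by
        have hlt : gtRank M < gtRank M' := gtRank_lt_of_lt hmax hM'M
        have h1 : omega0 * α + ((n - (m + 1) : ℕ) : Ordinal) + 1 ≤ gtRank M' := by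
          rw [Ordinal.add_one_eq_succ, Order.succ_le_iff]
          exact hge.trans_lt hlt
        have h2 : ((n - m : ℕ) : Ordinal) ≤ ((n - (m + 1) : ℕ) : Ordinal) + 1 := by
          rw [← Nat.cast_add_one, Nat.cast_le]
          omega
        calc omega0 * α + ((n - m : ℕ) : Ordinal)
            ≤ omega0 * α + (((n - (m + 1) : ℕ) : Ordinal) + 1) := add_le_add_right h2 _
          _ = omega0 * α + ((n - (m + 1) : ℕ) : Ordinal) + 1 := (add_assoc _ _ _).symm
          _ ≤ gtRank M' := h1
      have hag' : ∀ g' ∈ F, (g' ∈ M'.1 ↔ g' ∈ N.1) := by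
        intro g' hg'
        constructor
        · intro h
          exact (hag g' hg').1 (Subgroup.mem_inf.1 h).1
        · intro h
          exact Subgroup.mem_inf.2 ⟨(hag g' hg').2 h, hK3 h⟩
      exact ihm M' hNM' hag' hrank'

end AtomProduction
section Endgame

open Ordinal

theorem finite_map_of_inf_eq {G : Type u} [Group G] {N A K : Subgroup G} [hNn : N.Normal]
    (hKn : K.Normal) (hKidx : K.index ≠ 0) (hNK : N ≤ K) (hAK : A ⊓ K = N) :
    Finite (A.map (QuotientGroup.mk' N)) := by
  haveI := hKn
  haveI : Finite (G ⧸ K) := finite_quotient_of_index_ne_zero hKidx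
  set φ : G ⧸ N →* G ⧸ K := QuotientGroup.map N K (MonoidHom.id G)
    (by rwa [Subgroup.comap_id]) with hφ
  have key : Function.Injective (fun x : A.map (QuotientGroup.mk' N) => φ x.1) := by
    rintro ⟨x, hx⟩ ⟨y, hy⟩ h
    obtain ⟨a, ha, rfl⟩ := Subgroup.mem_map.1 hx
    obtain ⟨b, hb, rfl⟩ := Subgroup.mem_map.1 hy
    simp only [hφ, QuotientGroup.map_mk', MonoidHom.id_apply] at h
    have hab : a⁻¹ * b ∈ K := QuotientGroup.eq.1 h
    have habA : a⁻¹ * b ∈ A := A.mul_mem (A.inv_mem ha) hb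
    have habN : a⁻¹ * b ∈ N := by rw [← hAK]; exact ⟨habA, hab⟩
    apply Subtype.ext
    simp only [QuotientGroup.mk'_apply]
    exact QuotientGroup.eq.2 habN
  exact Finite.of_injective _ key

theorem finite_sup_of_normal_left {Q : Type*} [Group Q] (P R : Subgroup Q) [P.Normal]
    (hP : Finite P) (hR : Finite R) : Finite ↥(P ⊔ R) := by
  have hPs : (↑P : Set Q).Finite := Set.finite_coe_iff.1 hP
  have hRs : (↑R : Set Q).Finite := Set.finite_coe_iff.1 hR
  have hfin : (↑(P ⊔ R) : Set Q).Finite := by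
    rw [Subgroup.normal_mul P R]
    exact hPs.mul hRs
  exact Set.finite_coe_iff.2 hfin

variable {H : Type*} [Semigroup H] {G : Type u} [Group G] (act : H →ₙ* Monoid.End G)

theorem atoms_contradiction
    (hmax : WellFounded ((· > ·) : HNS act → HNS act → Prop))
    (hres : ∀ N : Subgroup G, N.Normal → HStable act N → ∀ g ∉ N,
      ∃ K : Subgroup G, K.Normal ∧ HStable act K ∧ N ≤ K ∧ K.index ≠ 0 ∧ g ∉ K)
    {N : HNS act}
    (hatoms : ∀ F : Finset G, ∃ A : HNS act, AtomOver act N A ∧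
      ∀ g ∈ F, (g ∈ A.1 ↔ g ∈ N.1)) :
    False := by
  classical
  haveI : N.1.Normal := N.2.1
  set π := QuotientGroup.mk' N.1 with hπ
  set 𝒜 : Set (HNS act) := {A | AtomOver act N A} with h𝒜
  have hinf : ¬ 𝒜.Finite := by
    intro hfin
    have hw : ∀ A : HNS act, ∃ g : G, A ∈ 𝒜 → (g ∈ A.1 ∧ g ∉ N.1) := by
      intro A
      by_cases hA : A ∈ 𝒜
      · obtain ⟨g, hg1, hg2⟩ := SetLike.exists_of_lt (Subtype.coe_lt_coe.2 hA.1)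
        exact ⟨g, fun _ => ⟨hg1, hg2⟩⟩
      · exact ⟨1, fun h => absurd h hA⟩
    choose w hwspec using hw
    obtain ⟨A₀, hA₀, hag⟩ := hatoms (hfin.toFinset.image w)
    have hmem : w A₀ ∈ hfin.toFinset.image w :=
      Finset.mem_image_of_mem w (hfin.mem_toFinset.2 hA₀)
    exact (hwspec A₀ hA₀).2 ((hag _ hmem).1 (hwspec A₀ hA₀).1)
  have hKA : ∀ A : HNS act, ∃ K : Subgroup G, A ∈ 𝒜 →
      (K.Normal ∧ N.1 ≤ K ∧ K.index ≠ 0 ∧ A.1 ⊓ K = N.1) := by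
    intro A
    by_cases hA : A ∈ 𝒜
    · obtain ⟨g, hgA, hgN⟩ := SetLike.exists_of_lt (Subtype.coe_lt_coe.2 hA.1)
      obtain ⟨K, hK1, hK2, hK3, hK4, hK5⟩ := hres N.1 N.2.1 N.2.2 g hgN
      refine ⟨K, fun _ => ⟨hK1, hK3, hK4, ?_⟩⟩
      set Z : HNS act := ⟨A.1 ⊓ K, isl_inf act A.2 ⟨hK1, hK2⟩⟩ with hZ
      have hle : N.1 ≤ A.1 ⊓ K := le_inf (Subtype.coe_le_coe.2 hA.1.le) hK3
      by_cases hc : A.1 ⊓ K = N.1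
      · exact hc
      · exfalso
        have hNZ : N < Z := Subtype.coe_lt_coe.1 (lt_of_le_of_ne hle (Ne.symm hc))
        have hZA : Z ≤ A := Subtype.coe_le_coe.1 inf_le_left
        have hZeq : Z = A := hA.2 Z hNZ hZA
        have hAK : A.1 ≤ K := by
          have hZ1 : Z.1 = A.1 := congrArg Subtype.val hZeq
          rw [← hZ1]
          exact inf_le_right
        exact hK5 (hAK hgA)
    · exact ⟨⊤, fun h => absurd h hA⟩
  choose κ hκ using hKA
  set S : Set (HNS act) := {Y | N ≤ Y ∧ ∃ t : Finset (HNS act), ↑t ⊆ 𝒜 ∧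
      Y.1 = N.1 ⊔ t.sup (fun B => B.1)} with hSdef
  have hNS : N ∈ S := ⟨le_rfl, ∅, by simp, by simp⟩
  obtain ⟨J, ⟨hNJ, t, htA, hJ⟩, hmaxJ⟩ := hmax.has_min S ⟨N, hNS⟩
  have hallle : ∀ A ∈ 𝒜, A.1 ≤ J.1 := by
    intro A hA
    set Y : HNS act := ⟨J.1 ⊔ A.1, isl_sup act J.2 A.2⟩ with hY
    have hYS : Y ∈ S := by
      refine ⟨hNJ.trans (Subtype.coe_le_coe.1 le_sup_left), insert A t, ?_, ?_⟩
      · rw [Finset.coe_insert]; exact Set.insert_subset hA htA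
      · show J.1 ⊔ A.1 = N.1 ⊔ (insert A t).sup (fun B => B.1)
        rw [Finset.sup_insert, hJ, sup_assoc, sup_comm (t.sup (fun B => B.1)) A.1]
    have hJY : J ≤ Y := Subtype.coe_le_coe.1 le_sup_left
    have hYJ : Y = J := by
      by_contra hne
      exact hmaxJ Y hYS (lt_of_le_of_ne hJY (Ne.symm hne))
    calc A.1 ≤ Y.1 := le_sup_right
      _ = J.1 := congrArg Subtype.val hYJ
  have hfinmap : ∀ A : HNS act, A ∈ 𝒜 → Finite (A.1.map π) := by
    intro A hA
    obtain ⟨hκ1, hκ2, hκ3, hκ4⟩ := hκ A hA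
    exact finite_map_of_inf_eq hκ1 hκ3 hκ2 hκ4
  have haux : ∀ t' : Finset (HNS act), ↑t' ⊆ 𝒜 →
      Finite ((t'.sup (fun B => B.1)).map π) := by
    intro t'
    induction t' using Finset.induction_on with
    | empty =>
      intro _
      rw [Finset.sup_empty]
      show Finite ((⊥ : Subgroup G).map π)
      rw [Subgroup.map_bot]
      infer_instance
    | @insert B t'' hB ih =>
      intro hsub
      rw [Finset.coe_insert, Set.insert_subset_iff] at hsub
      rw [Finset.sup_insert, Subgroup.map_sup]
      haveI : (B.1.map π).Normal := Subgroup.Normal.map B.2.1 π (QuotientGroup.mk'_surjective _)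
      exact finite_sup_of_normal_left _ _ (hfinmap B hsub.1) (ih hsub.2)
  have hfinJ : Finite (J.1.map π) := by
    have hNbot : N.1.map π = ⊥ := by
      rw [eq_bot_iff]
      intro x hx
      obtain ⟨a, ha, rfl⟩ := Subgroup.mem_map.1 hx
      have : π a = 1 := by
        rw [hπ, QuotientGroup.mk'_apply]
        exact (QuotientGroup.eq_one_iff a).2 ha
      rw [this]
      exact Subgroup.one_mem _
    rw [hJ, Subgroup.map_sup, hNbot, bot_sup_eq]
    exact haux t htA
  apply hinf
  have hJset : (↑(J.1.map π) : Set (G ⧸ N.1)).Finite := Set.finite_coe_iff.1 hfinJ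
  have hsubsets := hJset.finite_subsets
  apply Set.Finite.of_finite_image (f := fun A : HNS act => (↑(A.1.map π) : Set (G ⧸ N.1)))
  · apply hsubsets.subset
    rintro s ⟨A, hA, rfl⟩
    exact SetLike.coe_subset_coe.2 (Subgroup.map_mono (hallle A hA))
  · intro A₁ h₁ A₂ h₂ heq
    have hmapeq : A₁.1.map π = A₂.1.map π := SetLike.coe_set_eq.1 heq
    have e1 : A₁.1 ⊔ (QuotientGroup.mk' N.1).ker = A₂.1 ⊔ (QuotientGroup.mk' N.1).ker := by
      rw [← Subgroup.comap_map_eq π A₁.1, ← Subgroup.comap_map_eq π A₂.1, hmapeq]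
    rw [QuotientGroup.ker_mk'] at e1
    have hN1 : N.1 ≤ A₁.1 := Subtype.coe_le_coe.2 h₁.1.le
    have hN2 : N.1 ≤ A₂.1 := Subtype.coe_le_coe.2 h₂.1.le
    rw [sup_eq_left.2 hN1, sup_eq_left.2 hN2] at e1
    exact Subtype.ext e1

end Endgame
section Forward

open Ordinal

variable {H : Type*} [Semigroup H] {G : Type u} [Group G] (act : H →ₙ* Monoid.End G)

theorem omega_add_le_of_accPt
    (hmax : WellFounded ((· > ·) : HNS act → HNS act → Prop))
    (hres : ∀ N : Subgroup G, N.Normal → HStable act N → ∀ g ∉ N,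
      ∃ K : Subgroup G, K.Normal ∧ HStable act K ∧ N ≤ K ∧ K.index ≠ 0 ∧ g ∉ K)
    {N : HNS act} {α : Ordinal.{u}}
    (hacc : AccPt N (Filter.principal {M : HNS act | omega0 * α ≤ gtRank M})) :
    omega0 * α + omega0 ≤ gtRank N := by
  by_contra hcon
  push_neg at hcon
  obtain ⟨FN, hFNsub, hFNcl⟩ := exists_finset_gen act hmax N
  have hnear : ∀ F : Finset G, ∃ M : HNS act, N < M ∧ omega0 * α ≤ gtRank M ∧
      ∀ g ∈ F, (g ∈ M.1 ↔ g ∈ N.1) := by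
    intro F
    classical
    obtain ⟨M, hMS, hMne, hag⟩ := (chabauty_accPt_iff N _).1 hacc (F ∪ FN)
    have hNM : N.1 ≤ M.1 := by
      rw [← hFNcl]
      refine hcl_le act ⟨M.2.1, M.2.2⟩ ?_
      intro g hg
      exact (hag g (Finset.mem_union_right _ (Finset.mem_coe.1 hg))).2 (hFNsub hg)
    exact ⟨M, lt_of_le_of_ne (Subtype.coe_le_coe.1 hNM) (Ne.symm hMne), hMS,
      fun g hgF => hag g (Finset.mem_union_left _ hgF)⟩
  have hge : omega0 * α ≤ gtRank N := by
    obtain ⟨M, hNM, hMr, -⟩ := hnear ∅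
    exact hMr.trans (gtRank_lt_of_lt hmax hNM).le
  set δ := gtRank N - omega0 * α with hδdef
  have hδ : omega0 * α + δ = gtRank N := Ordinal.add_sub_cancel_of_le hge
  have hδω : δ < omega0 := by
    by_contra hδc
    push_neg at hδc
    have : omega0 * α + omega0 ≤ gtRank N := by rw [← hδ]; exact add_le_add_right hδc _
    exact absurd this (not_le.2 hcon)
  obtain ⟨n, hn⟩ := Ordinal.lt_omega0.1 hδω
  have hrankN : gtRank N ≤ omega0 * α + (n : Ordinal) := by rw [← hδ, hn]
  apply atoms_contradiction act hmax hres (N := N)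
  intro F
  obtain ⟨M, hNM, hMr, hag⟩ := hnear F
  exact exists_atom_agree act hmax hres hrankN F n M hNM hag (by simpa using hMr)

end Forward

section Assembly

open Ordinal

theorem cbD_zero' (X : Type*) [TopologicalSpace X] : cbD X 0 = Set.univ := by
  simp [cbD, Ordinal.limitRecOn_zero]

theorem cbD_succ' (X : Type*) [TopologicalSpace X] (o : Ordinal) :
    cbD X (Order.succ o) = {x | AccPt x (Filter.principal (cbD X o))} := by
  simp only [cbD, Ordinal.limitRecOn_succ]

theorem cbD_limit' (X : Type*) [TopologicalSpace X] (o : Ordinal) (ho : Order.IsSuccLimit o) :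
    cbD X o = ⋂ β : Set.Iio o, cbD X β.1 := by
  simp only [cbD]
  rw [Ordinal.limitRecOn_limit _ _ _ _ ho]

variable {H : Type*} [Semigroup H] {G : Type u} [Group G] (act : H →ₙ* Monoid.End G)

theorem mem_cbD_iff
    (hmax : WellFounded ((· > ·) : HNS act → HNS act → Prop))
    (hres : ∀ N : Subgroup G, N.Normal → HStable act N → ∀ g ∉ N,
      ∃ K : Subgroup G, K.Normal ∧ HStable act K ∧ N ≤ K ∧ K.index ≠ 0 ∧ g ∉ K)
    (α : Ordinal.{u}) (N : HNS act) :
    N ∈ cbD (HNS act) α ↔ omega0 * α ≤ gtRank N := by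
  induction α using Ordinal.induction generalizing N with
  | _ α ih =>
  rcases Ordinal.zero_or_succ_or_isSuccLimit α with h0 | ⟨β, rfl⟩ | hlim
  · subst h0
    rw [cbD_zero']
    simp
  · rw [cbD_succ']
    have hset : cbD (HNS act) β = {M : HNS act | omega0 * β ≤ gtRank M} :=
      Set.ext fun M => ih β (Order.lt_succ β) M
    rw [Set.mem_setOf_eq, hset, Ordinal.mul_succ]
    constructor
    · exact omega_add_le_of_accPt act hmax hres
    · exact accPt_of_omega_add_le act hmax hres
  · rw [cbD_limit' _ _ hlim]
    simp only [Set.mem_iInter]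
    constructor
    · intro hall
      rw [Ordinal.mul_le_iff_of_isSuccLimit hlim]
      intro β hβ
      exact (ih β hβ N).1 (hall ⟨β, hβ⟩)
    · intro hle β
      exact (ih β.1 β.2 N).2 ((mul_le_mul_right β.2.le omega0).trans hle)

end Assembly
/-- Let `H` be a semigroup and `G` an `H`-group satisfying `H`-max-n.
Suppose every `H`-quotient of `G` (including `G` itself) is residually finite as an
`H`-group: for every `H`-stable normal `N` and `g ∉ N` there is an `H`-stable normal
`K ⊇ N` of finite index with `g ∉ K`. Then `cb_H(G) = ℓ'_H(G)`: the trivial subgroup, as a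
point of the space `𝒩_H(G)` of `H`-stable normal subgroups with its Chabauty topology, has
Cantor–Bendixson rank exactly the reduced length `ℓ'_H(G)`. -/
theorem cb_eq_reduced_length_of_residually_finite {H : Type*} [Semigroup H]
    {G : Type u} [Group G] (act : H →ₙ* Monoid.End G)
    (hmax : WellFounded ((· > ·) :
      {N : Subgroup G // N.Normal ∧ HStable act N} →
        {N : Subgroup G // N.Normal ∧ HStable act N} → Prop))
    (hres : ∀ N : Subgroup G, N.Normal → HStable act N → ∀ g ∉ N,
      ∃ K : Subgroup G, K.Normal ∧ HStable act K ∧ N ≤ K ∧ K.index ≠ 0 ∧ g ∉ K) :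
    CBRankEq (hBot act) (gtRank (hBot act) / Ordinal.omega0) := by
  constructor
  · exact (mem_cbD_iff act hmax hres _ (hBot act)).2 (Ordinal.mul_div_le _ _)
  · intro hmem
    have h1 := (mem_cbD_iff act hmax hres _ (hBot act)).1 hmem
    rw [Ordinal.add_one_eq_succ, Ordinal.mul_succ] at h1
    have hlt : gtRank (hBot act) <
        Ordinal.omega0 * (gtRank (hBot act) / Ordinal.omega0) + Ordinal.omega0 := by
      conv_lhs => rw [← Ordinal.div_add_mod (gtRank (hBot act)) Ordinal.omega0]
      exact add_lt_add_right (Ordinal.mod_lt _ Ordinal.omega0_ne_zero) _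
    exact absurd h1 (not_le.2 hlt)
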